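/- arXiv:2406.09665 — 3 statements merged into one kernel-verified Lean document; each statement's English description precedes it below -/
import Mathlib

section
/- Let η be a bounded ℝ^d-valued random variable, β, σ > 0, and define Γ(x,y) := ‖x - βy‖₂²/(2σ²) and the vector field D(x) := E[η exp(-Γ(x,η))] / E[exp(-Γ(x,η))]. Then for every x ∈ ℝ^d the Jacobian ∇D(x) is the symmetric positive semidefinite matrix (β/σ²)·(E[η⊗η e^{-Γ(x,η)}]/E[e^{-Γ(x,η)}] − (E[η e^{-Γ(x,η)}]/E[e^{-Γ(x,η)}])^{⊗2}); in particular for every z ∈ ℝ^d, ⟨z·∇D(x), z⟩ = (β/σ²)·(E[⟨z,η⟩² e^{-Γ(x,η)}]/E[e^{-Γ(x,η)}] − (E[⟨z,η⟩ e^{-Γ(x,η)}]/E[e^{-Γ(x,η)}])²) ≥ 0. -/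
open MeasureTheory Real
open scoped RealInnerProductSpace

noncomputable def driftD {Ω : Type*} [MeasurableSpace Ω] (μ : Measure Ω) {d : ℕ}
    (η : Ω → EuclideanSpace ℝ (Fin d)) (β σ : ℝ) (x : EuclideanSpace ℝ (Fin d)) :
    EuclideanSpace ℝ (Fin d) :=
  (∫ ω, Real.exp (-(‖x - β • η ω‖ ^ 2 / (2 * σ ^ 2))) ∂μ)⁻¹ •
    ∫ ω, Real.exp (-(‖x - β • η ω‖ ^ 2 / (2 * σ ^ 2))) • η ω ∂μ

lemma aux_exp_deriv {d : ℕ} (σ : ℝ) (hσ : σ ≠ 0) (c y : EuclideanSpace ℝ (Fin d)) :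
    HasFDerivAt (fun y : EuclideanSpace ℝ (Fin d) => Real.exp (-(‖y - c‖ ^ 2 / (2 * σ ^ 2))))
      ((-(σ ^ 2)⁻¹ * Real.exp (-(‖y - c‖ ^ 2 / (2 * σ ^ 2)))) • (innerSL ℝ (y - c))) y := by
  have h1 : HasFDerivAt (fun y : EuclideanSpace ℝ (Fin d) => y - c)
      (ContinuousLinearMap.id ℝ _) y := (hasFDerivAt_id y).sub_const c
  have h4 := (h1.norm_sq.const_mul (-(2 * σ ^ 2)⁻¹)).exp
  simp only [show ∀ a : ℝ, -(2 * σ ^ 2)⁻¹ * a = -(a / (2 * σ ^ 2)) from fun a => by ring] at h4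
  refine h4.congr_fderiv ?_
  ext w
  simp only [ContinuousLinearMap.smul_apply, innerSL_apply_apply, ContinuousLinearMap.coe_comp',
    Function.comp_apply, ContinuousLinearMap.coe_id', id_eq, smul_eq_mul,
    ContinuousLinearMap.coe_smul', Pi.smul_apply, two_smul, ContinuousLinearMap.comp_id,
    ContinuousLinearMap.add_apply]
  rw [inner_sub_left]
  field_simp
  ring

set_option maxHeartbeats 2000000 in
theorem jacobian_of_driftD {Ω : Type*} [MeasurableSpace Ω] (μ : Measure Ω)
    [IsProbabilityMeasure μ] {d : ℕ}
    (η : Ω → EuclideanSpace ℝ (Fin d)) (hηm : Measurable η)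
    (K : ℝ) (hηb : ∀ ω, ‖η ω‖ ≤ K) (β σ : ℝ) (hβ : 0 < β) (hσ : 0 < σ)
    (x : EuclideanSpace ℝ (Fin d)) :
    DifferentiableAt ℝ (driftD μ η β σ) x ∧
    (∀ z w : EuclideanSpace ℝ (Fin d),
      ⟪z, fderiv ℝ (driftD μ η β σ) x w⟫ = ⟪w, fderiv ℝ (driftD μ η β σ) x z⟫) ∧
    (∀ z : EuclideanSpace ℝ (Fin d),
      ⟪z, fderiv ℝ (driftD μ η β σ) x z⟫ =
        (β / σ ^ 2) *
          ((∫ ω, ⟪z, η ω⟫ ^ 2 * Real.exp (-(‖x - β • η ω‖ ^ 2 / (2 * σ ^ 2))) ∂μ) /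
              (∫ ω, Real.exp (-(‖x - β • η ω‖ ^ 2 / (2 * σ ^ 2))) ∂μ) -
            ((∫ ω, ⟪z, η ω⟫ * Real.exp (-(‖x - β • η ω‖ ^ 2 / (2 * σ ^ 2))) ∂μ) /
                (∫ ω, Real.exp (-(‖x - β • η ω‖ ^ 2 / (2 * σ ^ 2))) ∂μ)) ^ 2) ∧
      0 ≤ ⟪z, fderiv ℝ (driftD μ η β σ) x z⟫) := by
  classical
  have hσ2 : (0:ℝ) < σ ^ 2 := by positivity
  have hσ2' : (σ:ℝ) ^ 2 ≠ 0 := ne_of_gt hσ2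
  -- Ω is nonempty, K is nonnegative
  have hne : Nonempty Ω := by
    by_contra h
    rw [not_nonempty_iff] at h
    have h0 : (μ Set.univ) = 1 := measure_univ
    rw [Set.univ_eq_empty_iff.mpr h, measure_empty] at h0
    exact one_ne_zero h0.symm
  obtain ⟨ω₀⟩ := hne
  have hK0 : (0:ℝ) ≤ K := le_trans (norm_nonneg _) (hηb ω₀)
  set G : EuclideanSpace ℝ (Fin d) → Ω → ℝ :=
    fun y ω => Real.exp (-(‖y - β • η ω‖ ^ 2 / (2 * σ ^ 2))) with hGdef
  have hGm : ∀ y, Measurable (G y) := fun y =>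
    Real.measurable_exp.comp
      (((measurable_const.sub (hηm.const_smul β)).norm.pow_const 2).div_const _).neg
  have hGpos : ∀ y ω, 0 < G y ω := fun y ω => Real.exp_pos _
  have hGle1 : ∀ y ω, G y ω ≤ 1 := fun y ω =>
    Real.exp_le_one_iff.mpr (neg_nonpos.mpr (by positivity))
  -- integrability of bounded multiples of G x
  have hint : ∀ (h : Ω → ℝ), Measurable h → ∀ C : ℝ, (∀ ω, |h ω| ≤ C) →
      Integrable (fun ω => G x ω * h ω) μ := by
    intro h hm C hC
    refine (integrable_const C).mono' (((hGm x).mul hm).aestronglyMeasurable)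
      (ae_of_all _ fun ω => ?_)
    rw [Real.norm_eq_abs, abs_mul, abs_of_pos (hGpos x ω)]
    calc G x ω * |h ω| ≤ 1 * C :=
          mul_le_mul (hGle1 x ω) (hC ω) (abs_nonneg _) zero_le_one
      _ = C := one_mul C
  have hintG : ∀ y, Integrable (G y) μ := by
    intro y
    refine (integrable_const (1:ℝ)).mono' ((hGm y).aestronglyMeasurable)
      (ae_of_all _ fun ω => ?_)
    rw [Real.norm_eq_abs, abs_of_pos (hGpos y ω)]
    exact hGle1 y ω
  have hintN : ∀ y, Integrable (fun ω => G y ω • η ω) μ := by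
    intro y
    refine (integrable_const K).mono'
      (((hGm y).aestronglyMeasurable).smul hηm.aestronglyMeasurable)
      (ae_of_all _ fun ω => ?_)
    rw [norm_smul, Real.norm_eq_abs, abs_of_pos (hGpos y ω)]
    calc G y ω * ‖η ω‖ ≤ 1 * K :=
          mul_le_mul (hGle1 y ω) (hηb ω) (norm_nonneg _) zero_le_one
      _ = K := one_mul K
  -- vector-valued integrands with bounded scalar coefficient
  have hintV : ∀ (h : Ω → ℝ), Measurable h → ∀ C : ℝ, (∀ ω, |h ω| ≤ C) →
      Integrable (fun ω => (G x ω * h ω) • η ω) μ := by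
    intro h hm C hC
    refine (integrable_const (C * K)).mono'
      ((((hGm x).mul hm).aestronglyMeasurable).smul hηm.aestronglyMeasurable)
      (ae_of_all _ fun ω => ?_)
    rw [norm_smul, Real.norm_eq_abs, abs_mul, abs_of_pos (hGpos x ω)]
    have h1 : G x ω * |h ω| ≤ C :=
      (mul_le_mul (hGle1 x ω) (hC ω) (abs_nonneg _) zero_le_one).trans_eq (one_mul C)
    have hC0 : 0 ≤ C := le_trans (abs_nonneg _) (hC ω₀)
    exact mul_le_mul h1 (hηb ω) (norm_nonneg _) hC0
  -- Z and N
  set Z : EuclideanSpace ℝ (Fin d) → ℝ := fun y => ∫ ω, G y ω ∂μ with hZdef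
  set N : EuclideanSpace ℝ (Fin d) → EuclideanSpace ℝ (Fin d) :=
    fun y => ∫ ω, G y ω • η ω ∂μ with hNdef
  -- positivity of Z x
  have hZpos : 0 < Z x := by
    have hGlow : ∀ ω, Real.exp (-((‖x‖ + β * K) ^ 2 / (2 * σ ^ 2))) ≤ G x ω := by
      intro ω
      apply Real.exp_le_exp.mpr
      apply neg_le_neg
      apply div_le_div_of_nonneg_right ?_ (by positivity)
      have h' : ‖x - β • η ω‖ ≤ ‖x‖ + β * K := by
        calc ‖x - β • η ω‖ ≤ ‖x‖ + ‖β • η ω‖ := norm_sub_le _ _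
          _ = ‖x‖ + |β| * ‖η ω‖ := by rw [norm_smul, Real.norm_eq_abs]
          _ ≤ ‖x‖ + β * K := by
              rw [abs_of_pos hβ]
              have := hηb ω
              nlinarith [norm_nonneg (η ω)]
      exact pow_le_pow_left₀ (norm_nonneg _) h' 2
    have : Real.exp (-((‖x‖ + β * K) ^ 2 / (2 * σ ^ 2))) ≤ Z x := by
      have := integral_mono (integrable_const _) (hintG x) hGlow
      simpa using this
    exact lt_of_lt_of_le (Real.exp_pos _) this
  have hZne : Z x ≠ 0 := ne_of_gt hZpos
  -- derivative CLMs
  set Φ : EuclideanSpace ℝ (Fin d) → Ω → (EuclideanSpace ℝ (Fin d) →L[ℝ] ℝ) :=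
    fun y ω => (-(σ ^ 2)⁻¹ * G y ω) • innerSL ℝ (y - β • η ω) with hΦdef
  set Ψ : EuclideanSpace ℝ (Fin d) → Ω → (EuclideanSpace ℝ (Fin d) →L[ℝ]
      EuclideanSpace ℝ (Fin d)) :=
    fun y ω => (Φ y ω).smulRight (η ω) with hΨdef
  have hsubm : Measurable (fun ω => x - β • η ω) := measurable_const.sub (hηm.const_smul β)
  have hΦmeas : AEStronglyMeasurable (Φ x) μ :=
    (((hGm x).const_mul _).aestronglyMeasurable).smul
      ((innerSL ℝ).continuous.comp_aestronglyMeasurable hsubm.aestronglyMeasurable)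
  have hΨmeas : AEStronglyMeasurable (Ψ x) μ := by
    have hcont : Continuous fun p : (EuclideanSpace ℝ (Fin d) →L[ℝ] ℝ) ×
        EuclideanSpace ℝ (Fin d) => p.1.smulRight p.2 :=
      (isBoundedBilinearMap_smulRight (𝕜 := ℝ)).continuous
    exact hcont.comp_aestronglyMeasurable (hΦmeas.prodMk hηm.aestronglyMeasurable)
  -- norm bounds on the derivatives in the unit ball around x
  have hΦbound : ∀ ω, ∀ y ∈ Metric.ball x 1, ‖Φ y ω‖ ≤ (σ ^ 2)⁻¹ * (‖x‖ + 1 + β * K) := by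
    intro ω y hy
    have hy' : ‖y‖ ≤ ‖x‖ + 1 := by
      have := mem_ball_iff_norm.mp hy
      have h2 : ‖y‖ - ‖x‖ ≤ ‖y - x‖ := norm_sub_norm_le y x
      linarith
    have hyb : ‖y - β • η ω‖ ≤ ‖x‖ + 1 + β * K := by
      calc ‖y - β • η ω‖ ≤ ‖y‖ + ‖β • η ω‖ := norm_sub_le _ _
        _ = ‖y‖ + |β| * ‖η ω‖ := by rw [norm_smul, Real.norm_eq_abs]
        _ ≤ (‖x‖ + 1) + β * K := by
            rw [abs_of_pos hβ]
            have := hηb ω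
            nlinarith [norm_nonneg (η ω)]
    simp only [hΦdef]
    refine le_trans (norm_smul_le (-(σ ^ 2)⁻¹ * G y ω) ((innerSL ℝ) (y - β • η ω))) ?_
    rw [innerSL_apply_norm, Real.norm_eq_abs, abs_mul, abs_neg, abs_inv,
      abs_of_pos hσ2, abs_of_pos (hGpos y ω)]
    calc (σ ^ 2)⁻¹ * G y ω * ‖y - β • η ω‖ ≤ (σ ^ 2)⁻¹ * 1 * (‖x‖ + 1 + β * K) := by
          apply mul_le_mul
          · exact mul_le_mul le_rfl (hGle1 y ω) (hGpos y ω).le (by positivity)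
          · exact hyb
          · exact norm_nonneg _
          · positivity
      _ = (σ ^ 2)⁻¹ * (‖x‖ + 1 + β * K) := by ring
  have hΨbound : ∀ ω, ∀ y ∈ Metric.ball x 1,
      ‖Ψ y ω‖ ≤ (σ ^ 2)⁻¹ * (‖x‖ + 1 + β * K) * K := by
    intro ω y hy
    rw [hΨdef]
    simp only
    rw [ContinuousLinearMap.norm_smulRight_apply]
    have h1 := hΦbound ω y hy
    have h2 := hηb ω
    have h3 : (0:ℝ) ≤ ‖Φ y ω‖ := norm_nonneg _
    nlinarith [norm_nonneg (η ω), mul_le_mul h1 h2 (norm_nonneg (η ω)) (by positivity)]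
  -- pointwise differentiability
  have hGd : ∀ ω y, HasFDerivAt (fun y => G y ω) (Φ y ω) y := fun ω y =>
    aux_exp_deriv σ (ne_of_gt hσ) (β • η ω) y
  have hNGd : ∀ ω y, HasFDerivAt (fun y => G y ω • η ω) (Ψ y ω) y := fun ω y =>
    (hGd ω y).smul_const (η ω)
  -- integrability of the derivative families
  have hΦint : Integrable (Φ x) μ := by
    refine (integrable_const ((σ ^ 2)⁻¹ * (‖x‖ + 1 + β * K))).mono' hΦmeas
      (ae_of_all _ fun ω => hΦbound ω x (Metric.mem_ball_self one_pos))
  have hΨint : Integrable (Ψ x) μ := by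
    refine (integrable_const ((σ ^ 2)⁻¹ * (‖x‖ + 1 + β * K) * K)).mono' hΨmeas
      (ae_of_all _ fun ω => hΨbound ω x (Metric.mem_ball_self one_pos))
  -- differentiation under the integral sign
  have hZd : HasFDerivAt Z (∫ ω, Φ x ω ∂μ) x := by
    apply hasFDerivAt_integral_of_dominated_of_fderiv_le (s := Metric.ball x 1) (Metric.ball_mem_nhds x one_pos)
      (Filter.Eventually.of_forall fun y => (hGm y).aestronglyMeasurable)
      (hintG x) hΦmeas
      (ae_of_all _ fun ω y hy => hΦbound ω y hy)
      (integrable_const _)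
      (ae_of_all _ fun ω y _ => hGd ω y)
  have hNd : HasFDerivAt N (∫ ω, Ψ x ω ∂μ) x := by
    apply hasFDerivAt_integral_of_dominated_of_fderiv_le (s := Metric.ball x 1) (Metric.ball_mem_nhds x one_pos)
      (Filter.Eventually.of_forall fun y =>
        ((hGm y).aestronglyMeasurable).smul hηm.aestronglyMeasurable)
      (hintN x) hΨmeas
      (ae_of_all _ fun ω y hy => hΨbound ω y hy)
      (integrable_const _)
      (ae_of_all _ fun ω y _ => hNGd ω y)
  -- derivative of 1/Z
  have hinv : HasFDerivAt (fun y => (Z y)⁻¹)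
      ((ContinuousLinearMap.smulRight (1 : ℝ →L[ℝ] ℝ) (-(Z x ^ 2)⁻¹)).comp
        (∫ ω, Φ x ω ∂μ)) x := by
    have := (hasFDerivAt_inv hZne).comp x hZd
    rw [ContinuousLinearMap.smulRight_one_eq_toSpanSingleton]
    exact this
  -- derivative of D
  set D' : EuclideanSpace ℝ (Fin d) →L[ℝ] EuclideanSpace ℝ (Fin d) :=
    (Z x)⁻¹ • (∫ ω, Ψ x ω ∂μ) +
      ((ContinuousLinearMap.smulRight (1 : ℝ →L[ℝ] ℝ) (-(Z x ^ 2)⁻¹)).comp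
        (∫ ω, Φ x ω ∂μ)).smulRight (N x) with hD'def
  have hDd : HasFDerivAt (driftD μ η β σ) D' x := by
    have h := hinv.smul hNd
    exact h
  have hfder : fderiv ℝ (driftD μ η β σ) x = D' := hDd.fderiv
  -- scalar integrals
  have hinnm : ∀ z : EuclideanSpace ℝ (Fin d), Measurable fun ω => ⟪z, η ω⟫ := fun z =>
    Measurable.inner measurable_const hηm
  have hinnb : ∀ z : EuclideanSpace ℝ (Fin d), ∀ ω, |⟪z, η ω⟫| ≤ ‖z‖ * K := fun z ω =>
    (abs_real_inner_le_norm z (η ω)).trans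
      (mul_le_mul_of_nonneg_left (hηb ω) (norm_nonneg z))
  have hint1 : ∀ z : EuclideanSpace ℝ (Fin d),
      Integrable (fun ω => G x ω * ⟪z, η ω⟫) μ := fun z =>
    hint _ (hinnm z) (‖z‖ * K) (hinnb z)
  have hint2 : ∀ z w : EuclideanSpace ℝ (Fin d),
      Integrable (fun ω => G x ω * (⟪z, η ω⟫ * ⟪w, η ω⟫)) μ := fun z w =>
    hint _ ((hinnm z).mul (hinnm w)) ((‖z‖ * K) * (‖w‖ * K)) fun ω => by
      rw [abs_mul]
      exact mul_le_mul (hinnb z ω) (hinnb w ω) (abs_nonneg _)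
        (by positivity)
  -- inner products with N x
  have hNinner : ∀ z : EuclideanSpace ℝ (Fin d),
      ⟪z, N x⟫ = ∫ ω, G x ω * ⟪z, η ω⟫ ∂μ := by
    intro z
    rw [hNdef]
    simp only
    rw [← integral_inner (hintN x) z]
    congr 1
    funext ω
    rw [real_inner_smul_right]
  -- the key computation
  have key : ∀ z w : EuclideanSpace ℝ (Fin d),
      ⟪z, D' w⟫ = (β / σ ^ 2) *
        ((∫ ω, G x ω * (⟪z, η ω⟫ * ⟪w, η ω⟫) ∂μ) / Z x -
          ((∫ ω, G x ω * ⟪z, η ω⟫ ∂μ) / Z x) * ((∫ ω, G x ω * ⟪w, η ω⟫ ∂μ) / Z x)) := by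
    intro z w
    have hZ'w : (∫ ω, Φ x ω ∂μ) w =
        -(σ ^ 2)⁻¹ * (⟪x, w⟫ * Z x - β * ∫ ω, G x ω * ⟪w, η ω⟫ ∂μ) := by
      rw [ContinuousLinearMap.integral_apply hΦint]
      have he : ∀ ω, (Φ x ω) w =
          -(σ ^ 2)⁻¹ * (⟪x, w⟫ * G x ω - β * (G x ω * ⟪w, η ω⟫)) := by
        intro ω
        rw [hΦdef]
        simp only [ContinuousLinearMap.smul_apply, innerSL_apply_apply, smul_eq_mul]
        rw [inner_sub_left, real_inner_smul_left, real_inner_comm (η ω) w]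
        ring
      simp only [he]
      rw [integral_const_mul _ _, integral_sub ((hintG x).const_mul _)
        ((hint1 w).const_mul _), integral_const_mul _ _, integral_const_mul _ _]
    have hN'w : ⟪z, (∫ ω, Ψ x ω ∂μ) w⟫ =
        -(σ ^ 2)⁻¹ * (⟪x, w⟫ * (∫ ω, G x ω * ⟪z, η ω⟫ ∂μ) -
          β * ∫ ω, G x ω * (⟪z, η ω⟫ * ⟪w, η ω⟫) ∂μ) := by
      rw [ContinuousLinearMap.integral_apply hΨint]
      have he : (fun ω => (Ψ x ω) w) =
          fun ω => (G x ω * (-(σ ^ 2)⁻¹ * (⟪x, w⟫ - β * ⟪w, η ω⟫))) • η ω := by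
        funext ω
        rw [hΨdef, hΦdef]
        simp only [ContinuousLinearMap.smulRight_apply, ContinuousLinearMap.smul_apply,
          innerSL_apply_apply, smul_eq_mul]
        rw [inner_sub_left, real_inner_smul_left, real_inner_comm (η ω) w]
        ring_nf
      rw [he]
      have hintw : Integrable (fun ω =>
          (G x ω * (-(σ ^ 2)⁻¹ * (⟪x, w⟫ - β * ⟪w, η ω⟫))) • η ω) μ := by
        apply hintV _ ((measurable_const.mul ((measurable_const.sub
          ((hinnm w).const_mul β)))) : Measurable fun ω => -(σ ^ 2)⁻¹ * (⟪x, w⟫ - β * ⟪w, η ω⟫))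
          ((σ ^ 2)⁻¹ * (|⟪x, w⟫| + β * (‖w‖ * K)))
        intro ω
        simp only [Pi.mul_apply]
        rw [abs_mul, abs_neg, abs_inv, abs_of_pos hσ2]
        apply mul_le_mul_of_nonneg_left _ (by positivity)
        calc |⟪x, w⟫ - β * ⟪w, η ω⟫| ≤ |⟪x, w⟫| + |β * ⟪w, η ω⟫| := abs_sub _ _
          _ ≤ |⟪x, w⟫| + β * (‖w‖ * K) := by
              rw [abs_mul, abs_of_pos hβ]
              have := hinnb w ω
              nlinarith [abs_nonneg ⟪w, η ω⟫]
      rw [← integral_inner hintw z]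
      have he2 : ∀ ω, ⟪z, (G x ω * (-(σ ^ 2)⁻¹ * (⟪x, w⟫ - β * ⟪w, η ω⟫))) • η ω⟫ =
          -(σ ^ 2)⁻¹ * (⟪x, w⟫ * (G x ω * ⟪z, η ω⟫) -
            β * (G x ω * (⟪z, η ω⟫ * ⟪w, η ω⟫))) := by
        intro ω
        rw [real_inner_smul_right]
        ring
      simp only [he2]
      rw [integral_const_mul _ _, integral_sub ((hint1 z).const_mul _)
        ((hint2 z w).const_mul _), integral_const_mul _ _, integral_const_mul _ _]
    rw [hD'def]
    simp only [ContinuousLinearMap.add_apply, ContinuousLinearMap.coe_smul', Pi.smul_apply,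
      ContinuousLinearMap.smulRight_apply, ContinuousLinearMap.coe_comp', Function.comp_apply,
      ContinuousLinearMap.one_apply, smul_eq_mul]
    rw [inner_add_right, real_inner_smul_right, real_inner_smul_right, hN'w, hZ'w, hNinner z]
    field_simp
    ring
  -- symmetry of the bilinear form
  have hsym : ∀ z w : EuclideanSpace ℝ (Fin d), ⟪z, D' w⟫ = ⟪w, D' z⟫ := by
    intro z w
    rw [key z w, key w z]
    have : (∫ ω, G x ω * (⟪z, η ω⟫ * ⟪w, η ω⟫) ∂μ) =
        ∫ ω, G x ω * (⟪w, η ω⟫ * ⟪z, η ω⟫) ∂μ := by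
      congr 1; funext ω; ring
    rw [this]
    ring
  refine ⟨hDd.differentiableAt, ?_, ?_⟩
  · intro z w
    rw [hfder]
    exact hsym z w
  · intro z
    rw [hfder]
    constructor
    · rw [key z z]
      have e1 : (∫ ω, ⟪z, η ω⟫ ^ 2 * G x ω ∂μ) =
          ∫ ω, G x ω * (⟪z, η ω⟫ * ⟪z, η ω⟫) ∂μ := by
        congr 1; funext ω; ring
      have e2 : (∫ ω, ⟪z, η ω⟫ * G x ω ∂μ) = ∫ ω, G x ω * ⟪z, η ω⟫ ∂μ := by
        congr 1; funext ω; ring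
      rw [e1, e2]
      ring
    · rw [key z z]
      set Iz := ∫ ω, G x ω * ⟪z, η ω⟫ ∂μ with hIz
      set Izz := ∫ ω, G x ω * (⟪z, η ω⟫ * ⟪z, η ω⟫) ∂μ with hIzz
      set m := Iz / Z x with hm
      have hvar : 0 ≤ ∫ ω, G x ω * (⟪z, η ω⟫ - m) ^ 2 ∂μ :=
        integral_nonneg fun ω => by positivity
      have hexp : (∫ ω, G x ω * (⟪z, η ω⟫ - m) ^ 2 ∂μ) =
          Izz - 2 * m * Iz + m ^ 2 * Z x := by
        have he : ∀ ω, G x ω * (⟪z, η ω⟫ - m) ^ 2 =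
            G x ω * (⟪z, η ω⟫ * ⟪z, η ω⟫) - 2 * m * (G x ω * ⟪z, η ω⟫) +
              m ^ 2 * G x ω := fun ω => by ring
        simp only [he]
        have i1 : Integrable (fun ω => G x ω * (⟪z, η ω⟫ * ⟪z, η ω⟫) -
            2 * m * (G x ω * ⟪z, η ω⟫)) μ := (hint2 z z).sub ((hint1 z).const_mul _)
        have i2 : Integrable (fun ω => m ^ 2 * G x ω) μ := (hintG x).const_mul _
        rw [integral_add i1 i2, integral_sub (hint2 z z) ((hint1 z).const_mul _),
          integral_const_mul _ _, integral_const_mul _ _]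
      rw [hexp] at hvar
      have hkey : 0 ≤ Izz / Z x - (Iz / Z x) * (Iz / Z x) := by
        have e : Izz / Z x - (Iz / Z x) * (Iz / Z x) =
            (Izz - 2 * m * Iz + m ^ 2 * Z x) / Z x := by
          rw [hm]; field_simp; ring
        rw [e]
        exact div_nonneg hvar hZpos.le
      have hβσ : 0 ≤ β / σ ^ 2 := by positivity
      calc (0:ℝ) = (β / σ ^ 2) * 0 := by ring
        _ ≤ (β / σ ^ 2) * (Izz / Z x - (Iz / Z x) * (Iz / Z x)) :=
            mul_le_mul_of_nonneg_left hkey hβσ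
end

section
/- Let η be an ℝ^d-valued random variable with ‖η‖₂ ≤ K almost surely, β, σ > 0, Γ(x,y) := ‖x − βy‖₂²/(2σ²), and D(x) := E[η e^{-Γ(x,η)}]/E[e^{-Γ(x,η)}]. Then for all x, y ∈ ℝ^d, ⟨x − y, D(x) − D(y)⟩ ≤ (βK²/σ²)‖x − y‖₂². -/
open MeasureTheory Real
open scoped RealInnerProductSpace

lemma bdd_integrable {Ω : Type*} [MeasurableSpace Ω] {μ : Measure Ω} [IsProbabilityMeasure μ]
    {E : Type*} [NormedAddCommGroup E] {f : Ω → E} (hf : AEStronglyMeasurable f μ) (c : ℝ)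
    (hb : ∀ᵐ ω ∂μ, ‖f ω‖ ≤ c) : Integrable f μ :=
  (integrable_const c).mono' hf (by simpa using hb)

lemma aux_deriv {Ω : Type*} [MeasurableSpace Ω] (μ : Measure Ω) [IsProbabilityMeasure μ]
    (a b φ : Ω → ℝ) (k : ℝ) (ha : Measurable a) (hb : Measurable b) (hφ : Measurable φ)
    (Cb Cφ : ℝ) (hbB : ∀ᵐ ω ∂μ, |b ω| ≤ Cb) (hφB : ∀ᵐ ω ∂μ, |φ ω| ≤ Cφ)
    (hpos : ∀ ω, ∀ s : ℝ, 0 ≤ a ω + b ω * s + k * s ^ 2) (s₀ : ℝ) :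
    HasDerivAt (fun s => ∫ ω, Real.exp (-(a ω + b ω * s + k * s ^ 2)) * φ ω ∂μ)
      (∫ ω, (-(b ω + 2 * k * s₀)) * Real.exp (-(a ω + b ω * s₀ + k * s₀ ^ 2)) * φ ω ∂μ) s₀ := by
  have hmeasF : ∀ s : ℝ, AEStronglyMeasurable
      (fun ω => Real.exp (-(a ω + b ω * s + k * s ^ 2)) * φ ω) μ := fun s =>
    ((((ha.add (hb.mul_const s)).add_const (k * s ^ 2)).neg.exp).mul hφ).aestronglyMeasurable
  have hexp_le : ∀ ω, ∀ s : ℝ, Real.exp (-(a ω + b ω * s + k * s ^ 2)) ≤ 1 := fun ω s => by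
    rw [Real.exp_le_one_iff]
    linarith [hpos ω s]
  have hF'meas : AEStronglyMeasurable
      (fun ω => (-(b ω + 2 * k * s₀)) * Real.exp (-(a ω + b ω * s₀ + k * s₀ ^ 2)) * φ ω) μ :=
    (((hb.add_const (2 * k * s₀)).neg.mul
      (((ha.add (hb.mul_const s₀)).add_const (k * s₀ ^ 2)).neg.exp)).mul hφ).aestronglyMeasurable
  have key := hasDerivAt_integral_of_dominated_loc_of_deriv_le (μ := μ)
    (F := fun s ω => Real.exp (-(a ω + b ω * s + k * s ^ 2)) * φ ω)
    (F' := fun s ω => (-(b ω + 2 * k * s)) * Real.exp (-(a ω + b ω * s + k * s ^ 2)) * φ ω)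
    (bound := fun _ => (Cb + 2 * |k| * (|s₀| + 1)) * Cφ)
    (s := Metric.ball s₀ 1) (Metric.ball_mem_nhds s₀ zero_lt_one)
    (Filter.Eventually.of_forall fun s => hmeasF s)
    (bdd_integrable (hmeasF s₀) Cφ ?_) hF'meas ?_ (integrable_const _) ?_
  · exact key.2
  · filter_upwards [hφB] with ω hφω
    rw [Real.norm_eq_abs, abs_mul]
    calc |Real.exp (-(a ω + b ω * s₀ + k * s₀ ^ 2))| * |φ ω|
        ≤ 1 * Cφ := by
          apply mul_le_mul _ hφω (abs_nonneg _) zero_le_one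
          rw [abs_of_pos (Real.exp_pos _)]
          exact hexp_le ω s₀
      _ = Cφ := one_mul Cφ
  · filter_upwards [hbB, hφB] with ω hbω hφω
    intro s hs
    rw [Real.norm_eq_abs, abs_mul, abs_mul]
    have h1 : |(-(b ω + 2 * k * s))| ≤ Cb + 2 * |k| * (|s₀| + 1) := by
      rw [abs_neg]
      have hsb : |s| ≤ |s₀| + 1 := by
        have := mem_ball_iff_norm.mp hs
        rw [Real.norm_eq_abs] at this
        have := abs_sub s s₀
        have h3 : |s| - |s₀| ≤ |s - s₀| := abs_sub_abs_le_abs_sub s s₀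
        linarith
      calc |b ω + 2 * k * s| ≤ |b ω| + |2 * k * s| := abs_add_le _ _
        _ ≤ Cb + 2 * |k| * (|s₀| + 1) := by
            rw [abs_mul, abs_mul]
            have : |k| * |s| ≤ |k| * (|s₀| + 1) :=
              mul_le_mul_of_nonneg_left hsb (abs_nonneg _)
            simp only [abs_two]
            nlinarith [abs_nonneg (b ω)]
    have h2 : |Real.exp (-(a ω + b ω * s + k * s ^ 2))| ≤ 1 := by
      rw [abs_of_pos (Real.exp_pos _)]; exact hexp_le ω s
    calc |(-(b ω + 2 * k * s))| * |Real.exp (-(a ω + b ω * s + k * s ^ 2))| * |φ ω|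
        ≤ (Cb + 2 * |k| * (|s₀| + 1)) * 1 * Cφ := by
          apply mul_le_mul _ hφω (abs_nonneg _)
          · have hc : (0:ℝ) ≤ Cb + 2 * |k| * (|s₀| + 1) := (abs_nonneg _).trans h1
            nlinarith
          · exact mul_le_mul h1 h2 (abs_nonneg _) ((abs_nonneg _).trans h1)
      _ = (Cb + 2 * |k| * (|s₀| + 1)) * Cφ := by ring
  · refine Filter.Eventually.of_forall fun ω => fun s _ => ?_
    have hq : HasDerivAt (fun s : ℝ => -(a ω + b ω * s + k * s ^ 2)) (-(b ω + 2 * k * s)) s := by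
      have h1 : HasDerivAt (fun s : ℝ => a ω + b ω * s + k * s ^ 2) (b ω + 2 * k * s) s := by
        have hp : HasDerivAt (fun s : ℝ => s ^ 2) (2 * s) s := by
          simpa using hasDerivAt_pow 2 s
        have := (((hasDerivAt_id s).const_mul (b ω)).const_add (a ω)).add (hp.const_mul k)
        exact this.congr_deriv (by ring)
      exact h1.neg
    have := hq.exp.mul_const (φ ω)
    exact this.congr_deriv (by ring)

lemma key_lemma {Ω : Type*} [MeasurableSpace Ω] (μ : Measure Ω) [IsProbabilityMeasure μ]
    (a θ : Ω → ℝ) (ha : Measurable a) (hθ : Measurable θ) (m : ℝ)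
    (hθb : ∀ᵐ ω ∂μ, |θ ω| ≤ m) (e₀ γ k : ℝ) (hγ : 0 < γ)
    (hpos : ∀ ω, ∀ s : ℝ, 0 ≤ a ω + (e₀ - γ * θ ω) * s + k * s ^ 2) :
    (∫ ω, Real.exp (-(a ω + (e₀ - γ * θ ω) * 1 + k * 1 ^ 2)) * θ ω ∂μ) /
      (∫ ω, Real.exp (-(a ω + (e₀ - γ * θ ω) * 1 + k * 1 ^ 2)) ∂μ) -
    (∫ ω, Real.exp (-(a ω + (e₀ - γ * θ ω) * 0 + k * 0 ^ 2)) * θ ω ∂μ) /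
      (∫ ω, Real.exp (-(a ω + (e₀ - γ * θ ω) * 0 + k * 0 ^ 2)) ∂μ) ≤ γ * m ^ 2 := by
  have hm0 : 0 ≤ m := by
    obtain ⟨ω, hω⟩ := hθb.exists
    exact (abs_nonneg _).trans hω
  set b : Ω → ℝ := fun ω => e₀ - γ * θ ω with hbdef
  have hbm : Measurable b := measurable_const.sub (hθ.const_mul γ)
  have hbB : ∀ᵐ ω ∂μ, |b ω| ≤ |e₀| + γ * m := by
    filter_upwards [hθb] with ω h
    have : |γ * θ ω| ≤ γ * m := by
      rw [abs_mul, abs_of_pos hγ]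
      exact mul_le_mul_of_nonneg_left h hγ.le
    calc |b ω| ≤ |e₀| + |γ * θ ω| := abs_sub _ _
      _ ≤ |e₀| + γ * m := by linarith
  set w : ℝ → Ω → ℝ := fun s ω => Real.exp (-(a ω + b ω * s + k * s ^ 2)) with hwdef
  have hwm : ∀ s, Measurable (w s) := fun s =>
    (((ha.add (hbm.mul_const s)).add_const (k * s ^ 2)).neg.exp)
  have hwpos : ∀ s ω, 0 < w s ω := fun s ω => Real.exp_pos _
  have hwle : ∀ s ω, w s ω ≤ 1 := fun s ω => by
    have h := hpos ω s
    simp only [hwdef, hbdef, Real.exp_le_one_iff]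
    linarith
  -- integrability of w s * φ for bounded φ
  have hintw : ∀ s : ℝ, Integrable (w s) μ := fun s =>
    bdd_integrable (hwm s).aestronglyMeasurable 1
      (Filter.Eventually.of_forall fun ω => by
        rw [Real.norm_eq_abs, abs_of_pos (hwpos s ω)]; exact hwle s ω)
  have hintwθ : ∀ s : ℝ, Integrable (fun ω => w s ω * θ ω) μ := fun s =>
    bdd_integrable ((hwm s).mul hθ).aestronglyMeasurable m
      (by filter_upwards [hθb] with ω h
          rw [Real.norm_eq_abs, abs_mul, abs_of_pos (hwpos s ω)]
          calc w s ω * |θ ω| ≤ 1 * m :=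
            mul_le_mul (hwle s ω) h (abs_nonneg _) zero_le_one
            _ = m := one_mul m)
  have hintwθ2 : ∀ s : ℝ, Integrable (fun ω => w s ω * θ ω ^ 2) μ := fun s =>
    bdd_integrable ((hwm s).mul (hθ.pow_const 2)).aestronglyMeasurable (m ^ 2)
      (by filter_upwards [hθb] with ω h
          rw [Real.norm_eq_abs, abs_mul, abs_of_pos (hwpos s ω)]
          have h2 : |θ ω ^ 2| ≤ m ^ 2 := by
            rw [abs_pow]
            exact pow_le_pow_left₀ (abs_nonneg _) h 2
          calc w s ω * |θ ω ^ 2| ≤ 1 * m ^ 2 :=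
            mul_le_mul (hwle s ω) h2 (abs_nonneg _) zero_le_one
            _ = m ^ 2 := one_mul _)
  set P : ℝ → ℝ := fun s => ∫ ω, w s ω ∂μ with hPdef
  set Q : ℝ → ℝ := fun s => ∫ ω, w s ω * θ ω ∂μ with hQdef
  set M : ℝ → ℝ := fun s => ∫ ω, w s ω * θ ω ^ 2 ∂μ with hMdef
  have hPpos : ∀ s, 0 < P s := by
    intro s
    refine (integral_pos_iff_support_of_nonneg (fun ω => (hwpos s ω).le) (hintw s)).2 ?_
    have : Function.support (w s) = Set.univ := by
      ext ω; simp [Function.support, (hwpos s ω).ne']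
    rw [this]
    simp
  have hMle : ∀ s, M s ≤ m ^ 2 * P s := by
    intro s
    have h1 : ∀ᵐ ω ∂μ, w s ω * θ ω ^ 2 ≤ m ^ 2 * w s ω := by
      filter_upwards [hθb] with ω h
      have h2 : θ ω ^ 2 ≤ m ^ 2 := by
        have := abs_le.1 h
        nlinarith
      nlinarith [hwpos s ω, (hwpos s ω).le]
    calc M s ≤ ∫ ω, m ^ 2 * w s ω ∂μ :=
          integral_mono_ae (hintwθ2 s) ((hintw s).const_mul _) h1
      _ = m ^ 2 * P s := integral_const_mul _ _
  -- derivatives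
  have hQSle : ∀ s, |Q s| ≤ m * P s := by
    intro s
    calc |Q s| ≤ ∫ ω, |w s ω * θ ω| ∂μ := by
          simpa only [Real.norm_eq_abs] using
            norm_integral_le_integral_norm (μ := μ) (fun ω => w s ω * θ ω)
      _ ≤ ∫ ω, m * w s ω ∂μ := by
          refine integral_mono_ae (hintwθ s).abs ((hintw s).const_mul _) ?_
          filter_upwards [hθb] with ω h
          rw [abs_mul, abs_of_pos (hwpos s ω)]
          calc w s ω * |θ ω| ≤ w s ω * m :=
                mul_le_mul_of_nonneg_left h (hwpos s ω).le
            _ = m * w s ω := mul_comm _ _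
      _ = m * P s := integral_const_mul _ _
  have hPder : ∀ s : ℝ, HasDerivAt P (γ * Q s - (e₀ + 2 * k * s) * P s) s := by
    intro s
    have h := aux_deriv μ a b (fun _ => 1) k ha hbm measurable_const (|e₀| + γ * m) 1 hbB
      (Filter.Eventually.of_forall fun ω => by norm_num) (fun ω t => hpos ω t) s
    have heq : (∫ ω, (-(b ω + 2 * k * s)) * Real.exp (-(a ω + b ω * s + k * s ^ 2)) * 1 ∂μ)
        = γ * Q s - (e₀ + 2 * k * s) * P s := by
      have : ∀ ω, (-(b ω + 2 * k * s)) * Real.exp (-(a ω + b ω * s + k * s ^ 2)) * 1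
          = γ * (w s ω * θ ω) - (e₀ + 2 * k * s) * w s ω := by
        intro ω
        simp only [hwdef, hbdef]
        ring
      rw [integral_congr_ae (Filter.Eventually.of_forall this),
        integral_sub ((hintwθ s).const_mul γ) ((hintw s).const_mul _),
        integral_const_mul, integral_const_mul]
    rw [heq] at h
    have heq2 : (fun t => ∫ ω, Real.exp (-(a ω + b ω * t + k * t ^ 2)) * 1 ∂μ) = P := by
      funext t
      rw [hPdef]
      simp [hwdef]
    rwa [heq2] at h
  have hQder : ∀ s : ℝ, HasDerivAt Q (γ * M s - (e₀ + 2 * k * s) * Q s) s := by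
    intro s
    have h := aux_deriv μ a b θ k ha hbm hθ (|e₀| + γ * m) m hbB hθb
      (fun ω t => hpos ω t) s
    have heq : (∫ ω, (-(b ω + 2 * k * s)) * Real.exp (-(a ω + b ω * s + k * s ^ 2)) * θ ω ∂μ)
        = γ * M s - (e₀ + 2 * k * s) * Q s := by
      have : ∀ ω, (-(b ω + 2 * k * s)) * Real.exp (-(a ω + b ω * s + k * s ^ 2)) * θ ω
          = γ * (w s ω * θ ω ^ 2) - (e₀ + 2 * k * s) * (w s ω * θ ω) := by
        intro ω
        simp only [hwdef, hbdef]
        ring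
      rw [integral_congr_ae (Filter.Eventually.of_forall this),
        integral_sub ((hintwθ2 s).const_mul γ) ((hintwθ s).const_mul _),
        integral_const_mul, integral_const_mul]
    rw [heq] at h
    exact h
  have hψder : ∀ s : ℝ, HasDerivAt (fun t => Q t / P t)
      (((γ * M s - (e₀ + 2 * k * s) * Q s) * P s
        - Q s * (γ * Q s - (e₀ + 2 * k * s) * P s)) / P s ^ 2) s := by
    intro s
    exact (hQder s).div (hPder s) (hPpos s).ne'
  have hψ'le : ∀ s : ℝ,
      ((γ * M s - (e₀ + 2 * k * s) * Q s) * P s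
        - Q s * (γ * Q s - (e₀ + 2 * k * s) * P s)) / P s ^ 2 ≤ γ * m ^ 2 := by
    intro s
    rw [div_le_iff₀ (pow_pos (hPpos s) 2)]
    have h1 : M s ≤ m ^ 2 * P s := hMle s
    have h2 : 0 < P s := hPpos s
    nlinarith [sq_nonneg (Q s), mul_le_mul_of_nonneg_left h1 hγ.le,
      mul_pos h2 h2, mul_le_mul_of_nonneg_right (mul_le_mul_of_nonneg_left h1 hγ.le) h2.le]
  have hmono : Monotone (fun s => γ * m ^ 2 * s - Q s / P s) := by
    have hder : ∀ s : ℝ, HasDerivAt (fun t => γ * m ^ 2 * t - Q t / P t)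
        (γ * m ^ 2 - (((γ * M s - (e₀ + 2 * k * s) * Q s) * P s
          - Q s * (γ * Q s - (e₀ + 2 * k * s) * P s)) / P s ^ 2)) s := by
      intro s
      have h1 : HasDerivAt (fun t : ℝ => γ * m ^ 2 * t) (γ * m ^ 2) s := by
        simpa using (hasDerivAt_id s).const_mul (γ * m ^ 2)
      exact h1.sub (hψder s)
    refine monotone_of_deriv_nonneg (fun s => (hder s).differentiableAt) ?_
    intro s
    rw [(hder s).deriv]
    linarith [hψ'le s]
  have hfin := hmono (by norm_num : (0:ℝ) ≤ 1)
  simp only at hfin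
  have e1 : Q 1 = ∫ ω, Real.exp (-(a ω + (e₀ - γ * θ ω) * 1 + k * 1 ^ 2)) * θ ω ∂μ := rfl
  have e2 : P 1 = ∫ ω, Real.exp (-(a ω + (e₀ - γ * θ ω) * 1 + k * 1 ^ 2)) ∂μ := rfl
  have e3 : Q 0 = ∫ ω, Real.exp (-(a ω + (e₀ - γ * θ ω) * 0 + k * 0 ^ 2)) * θ ω ∂μ := rfl
  have e4 : P 0 = ∫ ω, Real.exp (-(a ω + (e₀ - γ * θ ω) * 0 + k * 0 ^ 2)) ∂μ := rfl
  rw [← e1, ← e2, ← e3, ← e4]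
  linarith


theorem driftD_one_sided_lipschitz {Ω : Type*} [MeasurableSpace Ω] (μ : Measure Ω)
    [IsProbabilityMeasure μ] {d : ℕ}
    (η : Ω → EuclideanSpace ℝ (Fin d)) (hηm : Measurable η)
    (K : ℝ) (hηb : ∀ᵐ ω ∂μ, ‖η ω‖ ≤ K) (β σ : ℝ) (hβ : 0 < β) (hσ : 0 < σ)
    (x y : EuclideanSpace ℝ (Fin d)) :
    ⟪x - y, driftD μ η β σ x - driftD μ η β σ y⟫ ≤
      (β * K ^ 2 / σ ^ 2) * ‖x - y‖ ^ 2 := by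
  have hσ2 : (0 : ℝ) < σ ^ 2 := by positivity
  have hK0 : (0 : ℝ) ≤ K := by
    obtain ⟨ω, hω⟩ := hηb.exists
    exact (norm_nonneg _).trans hω
  set u : EuclideanSpace ℝ (Fin d) := x - y with hu
  set θ : Ω → ℝ := fun ω => ⟪u, η ω⟫ with hθdef
  set a : Ω → ℝ := fun ω => ‖y - β • η ω‖ ^ 2 / (2 * σ ^ 2) with hadef
  set e₀ : ℝ := ⟪u, y⟫ / σ ^ 2 with he₀
  set γ : ℝ := β / σ ^ 2 with hγdef
  set k : ℝ := ‖u‖ ^ 2 / (2 * σ ^ 2) with hkdef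
  have hθm : Measurable θ := by
    rw [hθdef]; measurability
  have ham : Measurable a := by
    rw [hadef]
    exact ((measurable_const.sub (hηm.const_smul β)).norm.pow_const 2).div_const _
  have hθb : ∀ᵐ ω ∂μ, |θ ω| ≤ K * ‖u‖ := by
    filter_upwards [hηb] with ω h
    calc |θ ω| ≤ ‖u‖ * ‖η ω‖ := abs_real_inner_le_norm u (η ω)
      _ ≤ ‖u‖ * K := mul_le_mul_of_nonneg_left h (norm_nonneg _)
      _ = K * ‖u‖ := mul_comm _ _
  have hγpos : 0 < γ := by rw [hγdef]; positivity
  have hE : ∀ (ω : Ω) (s : ℝ),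
      a ω + (e₀ - γ * θ ω) * s + k * s ^ 2 = ‖(y + s • u) - β • η ω‖ ^ 2 / (2 * σ ^ 2) := by
    intro ω s
    have hv : (y + s • u) - β • η ω = (y - β • η ω) + s • u := by abel
    rw [hv, norm_add_sq_real, real_inner_smul_right, norm_smul]
    have hiv : ⟪y - β • η ω, u⟫ = ⟪u, y⟫ - β * θ ω := by
      rw [real_inner_comm, inner_sub_right, real_inner_smul_right]
    rw [hiv]
    simp only [hadef, he₀, hγdef, hkdef, mul_pow, sq_abs, Real.norm_eq_abs]
    field_simp
  have hpos : ∀ ω, ∀ s : ℝ, 0 ≤ a ω + (e₀ - γ * θ ω) * s + k * s ^ 2 := by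
    intro ω s
    rw [hE ω s]
    positivity
  have hkey := key_lemma μ a θ ham hθm (K * ‖u‖) hθb e₀ γ k hγpos hpos
  -- identify the integrals with those in driftD
  have hDx : ∀ z : EuclideanSpace ℝ (Fin d), ∀ s : ℝ, y + s • u = z →
      ⟪u, driftD μ η β σ z⟫ =
        (∫ ω, Real.exp (-(a ω + (e₀ - γ * θ ω) * s + k * s ^ 2)) * θ ω ∂μ) /
          (∫ ω, Real.exp (-(a ω + (e₀ - γ * θ ω) * s + k * s ^ 2)) ∂μ) := by
    intro z s hz
    have hfun : ∀ ω, Real.exp (-(‖z - β • η ω‖ ^ 2 / (2 * σ ^ 2)))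
        = Real.exp (-(a ω + (e₀ - γ * θ ω) * s + k * s ^ 2)) := by
      intro ω
      rw [hE ω s, hz]
    have hwm : Measurable (fun ω => Real.exp (-(‖z - β • η ω‖ ^ 2 / (2 * σ ^ 2)))) :=
      ((((measurable_const.sub (hηm.const_smul β)).norm.pow_const 2).div_const _).neg).exp
    have hwle : ∀ ω, Real.exp (-(‖z - β • η ω‖ ^ 2 / (2 * σ ^ 2))) ≤ 1 := by
      intro ω
      rw [Real.exp_le_one_iff]
      have : (0:ℝ) ≤ ‖z - β • η ω‖ ^ 2 / (2 * σ ^ 2) := by positivity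
      linarith
    have hint : Integrable (fun ω => Real.exp (-(‖z - β • η ω‖ ^ 2 / (2 * σ ^ 2))) • η ω) μ := by
      refine (integrable_const K).mono' (hwm.aestronglyMeasurable.smul hηm.aestronglyMeasurable) ?_
      filter_upwards [hηb] with ω h
      rw [norm_smul, Real.norm_eq_abs, abs_of_pos (Real.exp_pos _)]
      calc Real.exp (-(‖z - β • η ω‖ ^ 2 / (2 * σ ^ 2))) * ‖η ω‖ ≤ 1 * K :=
            mul_le_mul (hwle ω) h (norm_nonneg _) zero_le_one
        _ = K := one_mul K
    rw [driftD, real_inner_smul_right]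
    have h2 : ⟪u, ∫ ω, Real.exp (-(‖z - β • η ω‖ ^ 2 / (2 * σ ^ 2))) • η ω ∂μ⟫
        = ∫ ω, Real.exp (-(‖z - β • η ω‖ ^ 2 / (2 * σ ^ 2))) * θ ω ∂μ := by
      have := (ContinuousLinearMap.integral_comp_comm (innerSL ℝ u) hint).symm
      simpa only [innerSL_apply_apply, real_inner_smul_right] using this
    rw [h2, inv_mul_eq_div]
    congr 1
    · exact integral_congr_ae (Filter.Eventually.of_forall fun ω => by simp only [hfun ω])
    · exact integral_congr_ae (Filter.Eventually.of_forall fun ω => by simp only [hfun ω])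
  have hx1 : y + (1 : ℝ) • u = x := by
    rw [one_smul, hu]
    abel
  have hy0 : y + (0 : ℝ) • u = y := by simp
  have hDx1 := hDx x 1 hx1
  have hDy0 := hDx y 0 hy0
  have hLHS : ⟪x - y, driftD μ η β σ x - driftD μ η β σ y⟫
      = ⟪u, driftD μ η β σ x⟫ - ⟪u, driftD μ η β σ y⟫ := by
    rw [← hu, inner_sub_right]
  rw [hLHS, hDx1, hDy0]
  have hfinal : γ * (K * ‖u‖) ^ 2 = (β * K ^ 2 / σ ^ 2) * ‖x - y‖ ^ 2 := by
    rw [hγdef, ← hu]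
    field_simp
  rw [← hfinal]
  exact hkey
end

section
/- Let f : ℝ^d → [0, ∞) be continuous with finite supremum f* attained at some point x*. Let X₁, …, X_N be i.i.d. random variables with law μ₀(dx) = ρ(x)dx. Then for any ε ∈ (0, f*), E|max_{n=1,…,N} f(X_n) − f*|² ≤ ε² + (f*)² e^{-N δ_ε}, where δ_ε := ∫_{{f > f* − ε}} ρ(x) dx. -/
open MeasureTheory ProbabilityTheory

theorem max_approx_sup {Ω : Type*} [MeasurableSpace Ω] (μ : Measure Ω)
    [IsProbabilityMeasure μ] {d : ℕ} (f : EuclideanSpace ℝ (Fin d) → ℝ)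
    (hf : Continuous f) (hf0 : ∀ x, 0 ≤ f x)
    (fs : ℝ) (xs : EuclideanSpace ℝ (Fin d)) (hfs : f xs = fs)
    (hsup : ∀ x, f x ≤ fs)
    (ρ : EuclideanSpace ℝ (Fin d) → ℝ) (hρ : Measurable ρ) (hρ0 : ∀ x, 0 ≤ ρ x)
    (N : ℕ) (hN : 0 < N) (X : Fin N → Ω → EuclideanSpace ℝ (Fin d))
    (hXm : ∀ n, Measurable (X n))
    (hlaw : ∀ n, Measure.map (X n) μ = volume.withDensity fun x => ENNReal.ofReal (ρ x))
    (hindep : iIndepFun X μ)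
    (ε : ℝ) (hε : ε ∈ Set.Ioo (0:ℝ) fs) :
    ∫ ω, |(⨆ n : Fin N, f (X n ω)) - fs| ^ 2 ∂μ ≤
      ε ^ 2 + fs ^ 2 * Real.exp (-(N : ℝ) * ∫ x in {x | fs - ε < f x}, ρ x) := by
  obtain ⟨hε0, hεfs⟩ := hε
  have hNe : Nonempty (Fin N) := ⟨⟨0, hN⟩⟩
  set A : Set (EuclideanSpace ℝ (Fin d)) := {x | f x ≤ fs - ε} with hA
  have hAm : MeasurableSet A := measurableSet_le hf.measurable measurable_const
  have hAc : Aᶜ = {x | fs - ε < f x} := by ext x; simp [hA, not_le]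
  set μ0 : Measure (EuclideanSpace ℝ (Fin d)) :=
    volume.withDensity fun x => ENNReal.ofReal (ρ x) with hμ0
  have hprob : IsProbabilityMeasure μ0 := by
    rw [← hlaw ⟨0, hN⟩]; exact Measure.isProbabilityMeasure_map (hXm _).aemeasurable
  have htot : ∫⁻ x, ENNReal.ofReal (ρ x) = 1 := by
    have := hprob.measure_univ
    rwa [hμ0, withDensity_apply _ MeasurableSet.univ, setLIntegral_univ] at this
  have hρint : Integrable ρ := by
    refine ⟨hρ.aestronglyMeasurable, ?_⟩
    rw [hasFiniteIntegral_iff_ofReal (ae_of_all _ hρ0), htot]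
    exact ENNReal.one_lt_top
  -- the measure of the complement set
  set δ : ℝ := ∫ x in Aᶜ, ρ x with hδ
  have hδ0 : 0 ≤ δ := setIntegral_nonneg hAm.compl fun x _ => hρ0 x
  have hδeq : ENNReal.ofReal δ = μ0 Aᶜ := by
    rw [hδ, ofReal_integral_eq_lintegral_ofReal (hρint.integrableOn) (ae_of_all _ fun x => hρ0 x),
      hμ0, withDensity_apply _ hAm.compl]
  set p : ℝ := (μ0 A).toReal with hp
  have hμ0A_ne : μ0 A ≠ ⊤ := measure_ne_top _ _
  have hsum : μ0 A + μ0 Aᶜ = 1 := by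
    rw [measure_add_measure_compl hAm]; exact hprob.measure_univ
  have hpδ : p + δ = 1 := by
    have := congrArg ENNReal.toReal hsum
    rwa [ENNReal.toReal_add hμ0A_ne (measure_ne_top _ _), ← hδeq,
      ENNReal.toReal_ofReal hδ0, ENNReal.toReal_one] at this
  have hp0 : 0 ≤ p := ENNReal.toReal_nonneg
  -- the intersection set
  set S : Set Ω := ⋂ n, X n ⁻¹' A with hSdef
  have hSm : MeasurableSet S := MeasurableSet.iInter fun n => (hXm n) hAm
  have hμS : (μ S).toReal = p ^ N := by
    have h1 : μ S = ∏ n : Fin N, μ (X n ⁻¹' A) :=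
      hindep.meas_iInter fun n => ⟨A, hAm, rfl⟩
    have h2 : ∀ n : Fin N, μ (X n ⁻¹' A) = μ0 A := fun n => by
      rw [← hlaw n, Measure.map_apply (hXm n) hAm]
    rw [h1]
    simp only [h2, Finset.prod_const, Finset.card_univ, Fintype.card_fin]
    rw [ENNReal.toReal_pow]
  -- pointwise bound
  have hbound : ∀ ω, |(⨆ n : Fin N, f (X n ω)) - fs| ^ 2 ≤
      ε ^ 2 + S.indicator (fun _ => fs ^ 2) ω := by
    intro ω
    have hMle : (⨆ n : Fin N, f (X n ω)) ≤ fs := ciSup_le fun n => hsup _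
    have hMge : ∀ n : Fin N, f (X n ω) ≤ ⨆ n : Fin N, f (X n ω) := fun n =>
      le_ciSup (f := fun n : Fin N => f (X n ω)) (Set.finite_range _).bddAbove n
    by_cases hω : ω ∈ S
    · have h0 : 0 ≤ ⨆ n : Fin N, f (X n ω) := le_trans (hf0 _) (hMge ⟨0, hN⟩)
      rw [Set.indicator_of_mem hω]
      have habs : |(⨆ n : Fin N, f (X n ω)) - fs| ≤ fs := by
        rw [abs_sub_comm, abs_of_nonneg (by linarith)]; linarith
      have := pow_le_pow_left₀ (abs_nonneg _) habs 2
      nlinarith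
    · rw [Set.indicator_of_notMem hω, add_zero]
      obtain ⟨n, hn⟩ : ∃ n : Fin N, fs - ε < f (X n ω) := by
        simpa [hSdef, hA, Set.mem_iInter, not_le] using hω
      have habs : |(⨆ n : Fin N, f (X n ω)) - fs| ≤ ε := by
        rw [abs_sub_comm, abs_of_nonneg (by linarith)]
        have := hMge n; linarith
      exact pow_le_pow_left₀ (abs_nonneg _) habs 2
  -- integrate
  have hg_int : Integrable (fun ω => ε ^ 2 + S.indicator (fun _ => fs ^ 2) ω) μ :=
    (integrable_const _).add ((integrable_const _).indicator hSm)
  have hmono : ∫ ω, |(⨆ n : Fin N, f (X n ω)) - fs| ^ 2 ∂μ ≤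
      ∫ ω, (ε ^ 2 + S.indicator (fun _ => fs ^ 2) ω) ∂μ :=
    integral_mono_of_nonneg (ae_of_all _ fun ω => by positivity) hg_int
      (ae_of_all _ hbound)
  have hgval : ∫ ω, (ε ^ 2 + S.indicator (fun _ => fs ^ 2) ω) ∂μ
      = ε ^ 2 + fs ^ 2 * (μ S).toReal := by
    rw [integral_add (integrable_const _) ((integrable_const _).indicator hSm),
      integral_const, integral_indicator_const _ hSm]
    simp [mul_comm, measureReal_def]
  -- final inequality
  have hexp : p ^ N ≤ Real.exp (-(N : ℝ) * δ) := by
    have h1 : p ≤ Real.exp (-δ) := by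
      have := Real.one_sub_le_exp_neg δ
      linarith
    calc p ^ N ≤ Real.exp (-δ) ^ N := pow_le_pow_left₀ hp0 h1 N
      _ = Real.exp (-(N : ℝ) * δ) := by
          rw [← Real.exp_nat_mul]; ring_nf
  have hgoal : (∫ x in {x | fs - ε < f x}, ρ x) = δ := by rw [hδ, hAc]
  rw [hgoal]
  calc ∫ ω, |(⨆ n : Fin N, f (X n ω)) - fs| ^ 2 ∂μ
      ≤ ε ^ 2 + fs ^ 2 * (μ S).toReal := hmono.trans_eq hgval
    _ ≤ ε ^ 2 + fs ^ 2 * Real.exp (-(N : ℝ) * δ) := by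
        rw [hμS]; gcongr
end
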